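/- The Stirling numbers of the second kind admit the probabilistic representation S(n,m) = C(n,m) · E[(U_1 + ... + U_m)^{n-m}], where U_1, ..., U_m are independent random variables uniformly distributed on [0,1] and 0 ≤ m ≤ n. -/

import Mathlib

open Finset MeasureTheory


lemma key_sum (m K : ℕ) (t : ℝ) :
    ∑ j ∈ range (m + 2), (-1 : ℝ) ^ j * ((m + 1).choose j) * (t + j) ^ K
      = ∑ j ∈ range (m + 1), (-1 : ℝ) ^ j * (m.choose j) * (t + j) ^ K
        - ∑ j ∈ range (m + 1), (-1 : ℝ) ^ j * (m.choose j) * (t + j + 1) ^ K := by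
  have h1 := Finset.sum_range_succ' (fun j => (-1 : ℝ) ^ j * ((m + 1).choose j) * (t + j) ^ K) (m + 1)
  have h2 := Finset.sum_range_succ' (fun j => (-1 : ℝ) ^ j * (m.choose j) * (t + j) ^ K) (m + 1)
  have h3 := Finset.sum_range_succ (fun j => (-1 : ℝ) ^ j * (m.choose j) * (t + j) ^ K) (m + 1)
  have e1 : ∀ x : ℕ, (-1 : ℝ) ^ (x + 1) * ((m + 1).choose (x + 1)) * (t + ((x : ℕ) + 1 : ℕ)) ^ K
      = -((-1) ^ x * (m.choose x) * (t + x + 1) ^ K)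
        + -((-1) ^ x * (m.choose (x + 1)) * (t + x + 1) ^ K) := by
    intro x
    rw [Nat.choose_succ_succ]
    push_cast
    ring
  have e2 : ∀ x : ℕ, (-1 : ℝ) ^ (x + 1) * (m.choose (x + 1)) * (t + ((x : ℕ) + 1 : ℕ)) ^ K
      = -((-1) ^ x * (m.choose (x + 1)) * (t + x + 1) ^ K) := by
    intro x; push_cast; ring
  simp only [e1, e2, Finset.sum_add_distrib, Finset.sum_neg_distrib] at h1 h2
  rw [h3] at h2
  rw [h1]
  simp only [Nat.choose_succ_self, Nat.cast_zero, mul_zero, zero_mul, add_zero, pow_zero,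
    Nat.choose_zero_right, Nat.cast_one, mul_one, one_mul, Nat.cast_zero] at h1 h2 ⊢
  linarith [h2]


lemma pi_restrict (m : ℕ) :
    (volume : Measure (Fin m → ℝ)).restrict (Set.Icc 0 1)
      = Measure.pi fun _ : Fin m => (volume : Measure ℝ).restrict (Set.Icc 0 1) := by
  refine (Measure.pi_eq (μ := fun _ : Fin m => (volume : Measure ℝ).restrict (Set.Icc 0 1))
    (fun s hs => ?_)).symm
  rw [Measure.restrict_apply (MeasurableSet.univ_pi hs)]
  have : Set.Icc (0 : Fin m → ℝ) 1 = Set.pi Set.univ fun _ => Set.Icc (0:ℝ) 1 :=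
    (Set.pi_univ_Icc _ _).symm
  rw [this, ← Set.pi_inter_distrib, volume_pi_pi]
  simp [Measure.restrict_apply (hs _)]


open intervalIntegral in
lemma integral_Icc_pow (c : ℝ) (K : ℕ) :
    ∫ x in Set.Icc (0:ℝ) 1, (c + x) ^ K = ((c + 1) ^ (K + 1) - c ^ (K + 1)) / ((K : ℝ) + 1) := by
  rw [MeasureTheory.integral_Icc_eq_integral_Ioc, ← intervalIntegral.integral_of_le zero_le_one,
    integral_comp_add_left (fun x => x ^ K) c, integral_pow]
  norm_num

lemma cube_integral (k : ℕ) : ∀ (m : ℕ) (t : ℝ),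
    ∫ u in Set.Icc (0 : Fin m → ℝ) 1, (t + ∑ i, u i) ^ k
      = ((k.factorial : ℝ) / (k + m).factorial) * ((-1 : ℝ) ^ m *
          ∑ j ∈ range (m + 1), (-1 : ℝ) ^ j * (m.choose j) * (t + j) ^ (k + m)) := by
  intro m
  induction m with
  | zero =>
    intro t
    have h0 : Set.Icc (0 : Fin 0 → ℝ) 1 = Set.univ :=
      Set.eq_univ_of_forall fun x => ⟨fun i => i.elim0, fun i => i.elim0⟩
    rw [h0, Measure.restrict_univ]
    simp [volume_pi, Measure.pi_univ, measureReal_def, div_self (Nat.cast_ne_zero.2 k.factorial_ne_zero : (k.factorial:ℝ) ≠ 0)]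
  | succ m ih =>
    intro t
    set μ0 := (volume : Measure ℝ).restrict (Set.Icc 0 1) with hμ0
    have hmp := measurePreserving_piFinSuccAbove
      (fun _ : Fin (m + 1) => (volume : Measure ℝ).restrict (Set.Icc (0:ℝ) 1)) 0
    have hcont : ∀ (l : ℕ) (c : ℝ), Integrable (fun u : Fin l → ℝ => (c + ∑ i, u i) ^ k)
        (Measure.pi fun _ : Fin l => (volume : Measure ℝ).restrict (Set.Icc 0 1)) := by
      intro l c
      rw [← pi_restrict]
      exact ContinuousOn.integrableOn_compact isCompact_Icc
        (((continuous_const.add (continuous_finset_sum _ fun i _ =>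
          continuous_apply i)).pow k).continuousOn)
    rw [pi_restrict]
    have step1 : ∫ u, (t + ∑ i, u i) ^ k ∂(Measure.pi fun _ : Fin (m+1) => μ0)
        = ∫ p : ℝ × (Fin m → ℝ), (t + (p.1 + ∑ i, p.2 i)) ^ k
            ∂(μ0.prod (Measure.pi fun _ : Fin m => μ0)) := by
      refine Eq.trans ?_
        (hmp.integral_comp' (fun p : ℝ × (Fin m → ℝ) => (t + (p.1 + ∑ i, p.2 i)) ^ k))
      refine integral_congr_ae (Filter.Eventually.of_forall fun u => ?_)
      simp [Fin.sum_univ_succ, Fin.zero_succAbove, Fin.tail]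
    have hint : Integrable (fun p : ℝ × (Fin m → ℝ) => (t + (p.1 + ∑ i, p.2 i)) ^ k)
        (μ0.prod (Measure.pi fun _ : Fin m => μ0)) := by
      have hmap : μ0.prod (Measure.pi fun _ : Fin m => μ0)
          = Measure.map (MeasurableEquiv.piFinSuccAbove (fun _ : Fin (m+1) => ℝ) 0)
              (Measure.pi fun _ : Fin (m+1) => μ0) := hmp.map_eq.symm
      rw [hmap, (MeasurableEquiv.piFinSuccAbove (fun _ : Fin (m+1) => ℝ)
        0).measurableEmbedding.integrable_map_iff]
      have : ((fun p : ℝ × (Fin m → ℝ) => (t + (p.1 + ∑ i, p.2 i)) ^ k) ∘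
          (MeasurableEquiv.piFinSuccAbove (fun _ : Fin (m+1) => ℝ) 0))
          = fun u : Fin (m+1) → ℝ => (t + ∑ i, u i) ^ k :=
        funext fun u => by simp [Fin.sum_univ_succ, Fin.zero_succAbove, Fin.tail]
      rw [this]
      exact hcont (m+1) t
    rw [step1, integral_prod _ hint]
    have hinner : ∀ x : ℝ,
        (∫ y : Fin m → ℝ, (t + (x + ∑ i, y i)) ^ k ∂(Measure.pi fun _ : Fin m => μ0))
        = ((k.factorial : ℝ) / (k + m).factorial) * ((-1 : ℝ) ^ m *
            ∑ j ∈ range (m + 1), (-1 : ℝ) ^ j * (m.choose j) * (t + x + j) ^ (k + m)) := by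
      intro x
      rw [hμ0, ← pi_restrict]
      simp_rw [← add_assoc]
      exact ih (t + x)
    simp_rw [hinner]
    have hint2 : ∀ j ∈ range (m + 1), Integrable
        (fun x : ℝ => (-1 : ℝ) ^ j * (m.choose j) * (t + x + j) ^ (k + m)) μ0 := by
      intro j _
      exact (ContinuousOn.integrableOn_compact isCompact_Icc
        (((continuous_const.add continuous_id).add continuous_const).pow (k+m)).continuousOn).integrable.const_mul _
    have hIcc : ∀ c : ℝ, ∫ x, (t + x + c) ^ (k + m) ∂μ0 =
        ((t + c + 1) ^ (k + m + 1) - (t + c) ^ (k + m + 1)) / ((k : ℝ) + m + 1) := by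
      intro c
      rw [hμ0]
      simp_rw [show ∀ x : ℝ, t + x + c = (t + c) + x from fun x => by ring]
      rw [integral_Icc_pow (t + c) (k + m)]
      push_cast
      ring_nf
    rw [integral_const_mul, integral_const_mul, integral_finset_sum _ hint2]
    simp_rw [integral_const_mul, hIcc]
    rw [show k + (m + 1) = k + m + 1 by ring]
    rw [show ∑ j ∈ range (m+1), (-1:ℝ)^j * (m.choose j) *
          (((t+j+1)^(k+m+1) - (t+j)^(k+m+1))/((k:ℝ)+m+1))
        = (∑ j ∈ range (m+1), (-1:ℝ)^j * (m.choose j) * (t+j+1)^(k+m+1)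
          - ∑ j ∈ range (m+1), (-1:ℝ)^j * (m.choose j) * (t+j)^(k+m+1)) / ((k:ℝ)+m+1) from by
      rw [← Finset.sum_sub_distrib, Finset.sum_div]
      exact Finset.sum_congr rfl fun j _ => by ring]
    rw [key_sum m (k+m+1) t]
    have hfac : ((k + m + 1).factorial : ℝ) = ((k:ℝ) + m + 1) * (k + m).factorial := by
      rw [Nat.factorial_succ]; push_cast; ring
    rw [hfac]
    have h1 : ((k+m).factorial : ℝ) ≠ 0 := Nat.cast_ne_zero.2 (Nat.factorial_ne_zero _)
    have h2 : ((k:ℝ) + m + 1) ≠ 0 := by positivity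
    field_simp
    ring

lemma neg_one_pow_sub {j m : ℕ} (h : j ≤ m) : (-1 : ℝ) ^ (m - j) = (-1) ^ m * (-1) ^ j := by
  have h1 : (-1 : ℝ) ^ (m - j) * (-1) ^ j = (-1) ^ m := by
    rw [← pow_add, Nat.sub_add_cancel h]
  have h2 : ((-1 : ℝ) ^ j) * ((-1 : ℝ) ^ j) = 1 := by
    rw [← pow_add]; exact Even.neg_one_pow ⟨j, rfl⟩
  calc (-1 : ℝ) ^ (m - j) = (-1 : ℝ) ^ (m - j) * (((-1:ℝ)^j) * ((-1:ℝ)^j)) := by rw [h2, mul_one]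
    _ = (-1) ^ m * (-1) ^ j := by rw [← mul_assoc, h1]

/-- The Stirling number of the second kind, defined by
`S(n,m) = (1/m!) ∑_{k=0}^{m} C(m,k) (-1)^{m-k} k^n`. -/
noncomputable def stirling2 (n m : ℕ) : ℝ :=
  ((m.factorial : ℝ))⁻¹ * ∑ k ∈ range (m + 1), (m.choose k : ℝ) * (-1) ^ (m - k) * (k : ℝ) ^ n

/-- Probabilistic representation of Stirling numbers of the second kind:
`S(n,m) = C(n,m) · E[(U_1 + ⋯ + U_m)^{n-m}]`, where `U_1, …, U_m` are i.i.d. uniform on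
`[0,1]` and the expectation is the integral over the unit cube. -/
theorem stirling2_eq_choose_mul_integral (n m : ℕ) (h : m ≤ n) :
    stirling2 n m = (n.choose m : ℝ) *
      ∫ u in Set.Icc (0 : Fin m → ℝ) 1, (∑ i, u i) ^ (n - m) := by
  have hc := cube_integral (n - m) m 0
  simp_rw [zero_add] at hc
  rw [Nat.sub_add_cancel h] at hc
  rw [hc, stirling2, ← mul_assoc]
  have hr : ((n.choose m : ℝ) * m.factorial * (n - m).factorial) = n.factorial := by
    exact_mod_cast congrArg (Nat.cast : ℕ → ℝ) (Nat.choose_mul_factorial_mul_factorial h)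
  have hcoef : (n.choose m : ℝ) * (((n - m).factorial : ℝ) / n.factorial)
      = ((m.factorial : ℝ))⁻¹ := by
    have h1 : ((n.factorial : ℝ)) ≠ 0 := Nat.cast_ne_zero.2 (Nat.factorial_ne_zero _)
    have h2 : ((m.factorial : ℝ)) ≠ 0 := Nat.cast_ne_zero.2 (Nat.factorial_ne_zero _)
    field_simp
    rw [← hr]; ring
  rw [hcoef]
  congr 1
  rw [Finset.mul_sum]
  refine Finset.sum_congr rfl fun j hj => ?_
  have hjm : j ≤ m := Nat.lt_succ_iff.mp (Finset.mem_range.mp hj)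
  rw [neg_one_pow_sub hjm]
  ring
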